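/- Let R₀ be a finite local ring with maximal ideal M₀ of order m₀ such that |R₀|/m₀ ≡ 3 (mod 4). Then the quadratic unitary Cayley graph 𝒢_{R₀} is Ramanujan if and only if |R₀| ≥ (m₀ + 2)²/4. -/

import Mathlib

/-- The set of squares of units of a commutative ring. -/
def QR (R : Type*) [CommRing R] : Set R := {x | ∃ u : Rˣ, (u : R) ^ 2 = x}

/-- The connection set of the quadratic unitary Cayley graph. -/
def TR (R : Type*) [CommRing R] : Set R := QR R ∪ -(QR R)

open scoped Classical in
/-- Adjacency matrix of the quadratic unitary Cayley graph `𝒢_R`. -/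
noncomputable def adjMat (R : Type*) [CommRing R] [Fintype R] : Matrix R R ℝ :=
  fun x y => if x - y ∈ TR R then 1 else 0

section Aux

open Finset Matrix
open scoped Classical

variable {R₀ : Type*} [CommRing R₀] [IsLocalRing R₀] [Fintype R₀] {M₀ : Ideal R₀}

private lemma unit_iff_notmem (hM : M₀.IsMaximal) (x : R₀) : IsUnit x ↔ x ∉ M₀ := by
  rw [IsLocalRing.eq_maximalIdeal hM]
  simp [IsLocalRing.mem_maximalIdeal, not_not]

private lemma sq_eq_one_units (hM : M₀.IsMaximal) (hu2 : IsUnit (2 : R₀)) (x : R₀ˣ)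
    (hx : x ^ 2 = 1) : x = 1 ∨ x = -1 := by
  have hx' : (x : R₀) ^ 2 = 1 := by
    have := congrArg Units.val hx; push_cast at this; exact this
  have h0 : ((x : R₀) - 1) * ((x : R₀) + 1) = 0 := by linear_combination hx'
  by_cases h1 : (x : R₀) - 1 ∈ M₀
  · have h2 : (x : R₀) + 1 ∉ M₀ := by
      intro h2
      have h2' : ((x : R₀) + 1) - ((x : R₀) - 1) = 2 := by ring
      exact ((unit_iff_notmem hM 2).mp hu2) (h2' ▸ M₀.sub_mem h2 h1)
    have h2u : IsUnit ((x : R₀) + 1) := (unit_iff_notmem hM _).mpr h2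
    left
    have hxv : (x : R₀) = 1 := sub_eq_zero.mp ((h2u.mul_left_eq_zero).mp h0)
    exact Units.ext (by simpa using hxv)
  · have h1u : IsUnit ((x : R₀) - 1) := (unit_iff_notmem hM _).mpr h1
    right
    have hxv : (x : R₀) = -1 := eq_neg_of_add_eq_zero_left ((h1u.mul_right_eq_zero).mp h0)
    exact Units.ext (by simpa using hxv)

private lemma units_sq_cover (hM : M₀.IsMaximal) (hu2 : IsUnit (2 : R₀))
    (hns : ∀ s : R₀ˣ, s ^ 2 ≠ (-1 : R₀ˣ)) (hnt : Nontrivial R₀) (u : R₀ˣ) :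
    (∃ s : R₀ˣ, s ^ 2 = u) ∨ (∃ s : R₀ˣ, s ^ 2 = -u) := by
  classical
  have h2z : (2 : R₀) ≠ 0 := by
    intro h; rw [h] at hu2; exact zero_ne_one (isUnit_zero_iff.mp hu2)
  have hneg1 : (-1 : R₀ˣ) ≠ 1 := by
    intro h
    have : (-1 : R₀) = 1 := by have := congrArg Units.val h; simpa using this
    exact h2z (by linear_combination -this)
  have hnegne : ∀ t : R₀ˣ, t ≠ -t := by
    intro t h
    exact hneg1 (by
      have := mul_right_cancel (a := (-1 : R₀ˣ)) (b := t) (c := 1) ?_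
      · exact this
      · simpa [mul_comm] using h.symm)
  let Sq : Finset R₀ˣ := univ.image (· ^ 2)
  have hfilter : ∀ t : R₀ˣ, univ.filter (· ^ 2 = t ^ 2) = {t, -t} := by
    intro t
    ext x
    simp only [mem_filter, mem_univ, true_and, mem_insert, mem_singleton]
    constructor
    · intro h
      have hx1 : (x * t⁻¹) ^ 2 = 1 := by
        rw [mul_pow, h]
        simp [← mul_pow]
      rcases sq_eq_one_units hM hu2 _ hx1 with h' | h'
      · left
        have := congrArg (· * t) h'; simpa using this
      · right
        have := congrArg (· * t) h'; simpa using this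
    · rintro (rfl | rfl)
      · rfl
      · exact neg_sq t
  have hcard : Fintype.card R₀ˣ = 2 * Sq.card := by
    have h1 : (univ : Finset R₀ˣ).card = ∑ b ∈ Sq, (univ.filter (· ^ 2 = b)).card :=
      card_eq_sum_card_image (· ^ 2) univ
    have h2 : ∀ b ∈ Sq, (univ.filter (· ^ 2 = b)).card = 2 := by
      intro b hb
      obtain ⟨t, -, rfl⟩ := mem_image.mp hb
      rw [hfilter t, card_insert_of_notMem (by simpa using hnegne t), card_singleton]
    rw [← Finset.card_univ, h1, Finset.sum_congr rfl h2, Finset.sum_const, smul_eq_mul, mul_comm]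
  let NSq : Finset R₀ˣ := Sq.image (fun s => -s)
  have hdisj : Disjoint Sq NSq := by
    rw [Finset.disjoint_left]
    rintro a haSq haN
    obtain ⟨b, hb, rfl⟩ := mem_image.mp haN
    obtain ⟨s, -, hs⟩ := mem_image.mp haSq
    obtain ⟨t, -, ht⟩ := mem_image.mp hb
    exact hns (s * t⁻¹) (by
      rw [mul_pow, hs, ← ht, inv_pow]
      rw [← ht] at hs
      group
      simp [neg_div, div_self'])
  have hNcard : NSq.card = Sq.card := Finset.card_image_of_injective _ neg_injective
  have huniv : Sq ∪ NSq = univ := by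
    apply Finset.eq_univ_of_card
    rw [Finset.card_union_of_disjoint hdisj, hNcard, ← hcard.symm]
    omega
  have : u ∈ Sq ∪ NSq := huniv ▸ mem_univ u
  rcases Finset.mem_union.mp this with h | h
  · obtain ⟨s, -, hs⟩ := mem_image.mp h
    exact Or.inl ⟨s, hs⟩
  · obtain ⟨b, hb, hbu⟩ := mem_image.mp h
    obtain ⟨s, -, hs⟩ := mem_image.mp hb
    exact Or.inr ⟨s, by rw [hs, ← hbu, neg_neg]⟩

private lemma basic_facts (hM : M₀.IsMaximal)
    (h3 : Fintype.card R₀ / Nat.card M₀ % 4 = 3) :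
    IsUnit (2 : R₀) ∧ (∀ s : R₀ˣ, s ^ 2 ≠ (-1 : R₀ˣ)) ∧ Nontrivial R₀ ∧
      Fintype.card R₀ = Nat.card M₀ * Nat.card (R₀ ⧸ M₀) ∧
      Nat.card (R₀ ⧸ M₀) % 4 = 3 ∧ 1 ≤ Nat.card M₀ := by
  classical
  haveI := hM
  letI : Field (R₀ ⧸ M₀) := Ideal.Quotient.field M₀
  haveI : Finite (R₀ ⧸ M₀) := Finite.of_surjective _ Ideal.Quotient.mk_surjective
  letI : Fintype (R₀ ⧸ M₀) := Fintype.ofFinite _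
  have hm1 : 1 ≤ Nat.card M₀ := Nat.card_pos
  have hcard : Fintype.card R₀ = Nat.card M₀ * Nat.card (R₀ ⧸ M₀) := by
    rw [← Nat.card_eq_fintype_card]
    exact Submodule.card_eq_card_quotient_mul_card M₀
  have hq3 : Nat.card (R₀ ⧸ M₀) % 4 = 3 := by
    rw [hcard, Nat.mul_div_cancel_left _ hm1] at h3
    exact h3
  have hqcard : Nat.card (R₀ ⧸ M₀) = Fintype.card (R₀ ⧸ M₀) := Nat.card_eq_fintype_card
  have hnt : Nontrivial R₀ := by
    by_contra h
    rw [not_nontrivial_iff_subsingleton] at h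
    exact hM.ne_top (Subsingleton.elim _ _)
  have h2k : (2 : R₀ ⧸ M₀) ≠ 0 := by
    intro h2
    obtain ⟨l, hl⟩ : ∃ l, Fintype.card (R₀ ⧸ M₀) = 2 * l + 1 := by
      rw [← hqcard]; exact ⟨Nat.card (R₀ ⧸ M₀) / 2, by omega⟩
    have hc0 : ((Fintype.card (R₀ ⧸ M₀) : ℕ) : R₀ ⧸ M₀) = 0 := FiniteField.cast_card_eq_zero _
    rw [hl] at hc0
    push_cast at hc0
    rw [h2] at hc0
    simp at hc0
  have h2u : IsUnit (2 : R₀) := by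
    rw [unit_iff_notmem hM]
    intro h
    exact h2k (by
      have : (Ideal.Quotient.mk M₀) (2 : R₀) = 0 := Ideal.Quotient.eq_zero_iff_mem.mpr h
      simpa [map_ofNat] using this)
  have hns : ∀ s : R₀ˣ, s ^ 2 ≠ (-1 : R₀ˣ) := by
    intro s h
    have h' : ((s : R₀)) ^ 2 = -1 := by
      have := congrArg Units.val h; push_cast at this; exact this
    have hsq : IsSquare (-1 : R₀ ⧸ M₀) := by
      refine ⟨Ideal.Quotient.mk M₀ (s : R₀), ?_⟩
      rw [← _root_.map_mul, ← sq, h', map_neg, _root_.map_one]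
    rw [FiniteField.isSquare_neg_one_iff] at hsq
    rw [← hqcard] at hsq
    exact hsq hq3
  exact ⟨h2u, hns, hnt, hcard, hq3, hm1⟩

private lemma mem_TR_iff (hM : M₀.IsMaximal)
    (h3 : Fintype.card R₀ / Nat.card M₀ % 4 = 3) (x : R₀) :
    x ∈ TR R₀ ↔ x ∉ M₀ := by
  obtain ⟨h2u, hns, hnt, -, -, -⟩ := basic_facts hM h3
  constructor
  · rintro (⟨u, hu⟩ | hx)
    · rw [← unit_iff_notmem hM]
      exact hu ▸ (u.isUnit.pow 2)
    · rw [← unit_iff_notmem hM]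
      obtain ⟨u, hu⟩ := Set.mem_neg.mp hx
      have : IsUnit (-x) := hu ▸ (u.isUnit.pow 2)
      simpa using this.neg
  · intro hx
    obtain ⟨u, rfl⟩ := (unit_iff_notmem hM x).mpr hx
    rcases units_sq_cover hM h2u hns hnt u with ⟨s, hs⟩ | ⟨s, hs⟩
    · exact Or.inl ⟨s, by rw [← Units.val_pow_eq_pow_val, hs]⟩
    · refine Or.inr (Set.mem_neg.mpr ⟨s, ?_⟩)
      rw [← Units.val_pow_eq_pow_val, hs]
      simp

private lemma cardM_filter (M₀ : Ideal R₀) :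
    (univ.filter (fun z => z ∈ M₀)).card = Nat.card M₀ := by
  classical
  rw [Nat.card_eq_fintype_card]
  rw [Fintype.card_subtype]

private lemma countCoset (M₀ : Ideal R₀) (a : R₀) :
    (univ.filter (fun z => a - z ∈ M₀)).card = Nat.card M₀ := by
  classical
  rw [← cardM_filter M₀]
  refine card_nbij' (fun z => a - z) (fun w => a - w) ?_ ?_ ?_ ?_
  · intro z hz; simp only [mem_coe, mem_filter, mem_univ, true_and] at hz ⊢; exact hz
  · intro w hw; simp only [mem_coe, mem_filter, mem_univ, true_and] at hw ⊢
    simpa [sub_sub_cancel] using hw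
  · intro z _; simp [sub_sub_cancel]
  · intro w _; simp [sub_sub_cancel]

private lemma countCoset' (M₀ : Ideal R₀) (a : R₀) :
    (univ.filter (fun z => z - a ∈ M₀)).card = Nat.card M₀ := by
  classical
  rw [← cardM_filter M₀]
  refine card_nbij' (fun z => z - a) (fun w => w + a) ?_ ?_ ?_ ?_
  · intro z hz; simp only [mem_coe, mem_filter, mem_univ, true_and] at hz ⊢; exact hz
  · intro w hw; simp only [mem_coe, mem_filter, mem_univ, true_and] at hw ⊢
    simpa using hw
  · intro z _; simp
  · intro w _; simp

private lemma countInter (M₀ : Ideal R₀) (a : R₀) :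
    (univ.filter (fun z => a - z ∈ M₀ ∧ z ∈ M₀)).card
      = if a ∈ M₀ then Nat.card M₀ else 0 := by
  classical
  by_cases ha : a ∈ M₀
  · rw [if_pos ha, ← cardM_filter M₀]
    congr 1
    ext z
    simp only [mem_filter, mem_univ, true_and]
    exact ⟨And.right, fun hz => ⟨M₀.sub_mem ha hz, hz⟩⟩
  · rw [if_neg ha]
    rw [Finset.card_eq_zero]
    apply Finset.eq_empty_of_forall_notMem
    intro z hz
    rw [mem_filter] at hz
    exact ha (by simpa [sub_add_cancel] using M₀.add_mem hz.2.1 hz.2.2)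

private lemma countInter2 (M₀ : Ideal R₀) (x y : R₀) :
    (univ.filter (fun z => x - z ∈ M₀ ∧ z - y ∈ M₀)).card
      = if x - y ∈ M₀ then Nat.card M₀ else 0 := by
  classical
  rw [← countInter M₀ (x - y)]
  refine card_nbij' (fun z => z - y) (fun w => w + y) ?_ ?_ ?_ ?_
  · intro z hz; simp only [mem_coe, mem_filter, mem_univ, true_and] at hz ⊢
    refine ⟨?_, hz.2⟩
    have : x - y - (z - y) = x - z := by ring
    rw [this]; exact hz.1
  · intro w hw; simp only [mem_coe, mem_filter, mem_univ, true_and] at hw ⊢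
    refine ⟨?_, by simpa using hw.2⟩
    have : x - (w + y) = x - y - w := by ring
    rw [this]; exact hw.1
  · intro z _; simp
  · intro w _; simp

private lemma adj_apply (hM : M₀.IsMaximal)
    (h3 : Fintype.card R₀ / Nat.card M₀ % 4 = 3) (x y : R₀) :
    adjMat R₀ x y = if x - y ∈ M₀ then 0 else 1 := by
  show (if x - y ∈ TR R₀ then (1 : ℝ) else 0) = _
  rw [if_congr (mem_TR_iff hM h3 _) rfl rfl, ite_not]

private lemma rowsum (hM : M₀.IsMaximal)
    (h3 : Fintype.card R₀ / Nat.card M₀ % 4 = 3) (x : R₀) :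
    ∑ y, adjMat R₀ x y = (Fintype.card R₀ : ℝ) - Nat.card M₀ := by
  classical
  have h : ∀ y, adjMat R₀ x y = 1 - (if x - y ∈ M₀ then (1 : ℝ) else 0) := by
    intro y; rw [adj_apply hM h3]; by_cases h : x - y ∈ M₀ <;> simp [h]
  simp only [h]
  rw [Finset.sum_sub_distrib, Finset.sum_const, Finset.sum_boole, countCoset M₀ x]
  simp [Finset.card_univ]

private lemma mulsum (hM : M₀.IsMaximal)
    (h3 : Fintype.card R₀ / Nat.card M₀ % 4 = 3) (x y : R₀) :
    ∑ z, adjMat R₀ x z * adjMat R₀ z y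
      = (Fintype.card R₀ : ℝ) - 2 * Nat.card M₀
        + (if x - y ∈ M₀ then (Nat.card M₀ : ℝ) else 0) := by
  classical
  have hterm : ∀ z, adjMat R₀ x z * adjMat R₀ z y
      = 1 - (if x - z ∈ M₀ then (1 : ℝ) else 0) - (if z - y ∈ M₀ then (1 : ℝ) else 0)
        + (if x - z ∈ M₀ ∧ z - y ∈ M₀ then (1 : ℝ) else 0) := by
    intro z
    rw [adj_apply hM h3, adj_apply hM h3]
    by_cases h1 : x - z ∈ M₀ <;> by_cases h2 : z - y ∈ M₀ <;> simp [h1, h2]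
  simp only [hterm]
  rw [Finset.sum_add_distrib, Finset.sum_sub_distrib, Finset.sum_sub_distrib,
    Finset.sum_const, Finset.sum_boole, Finset.sum_boole, Finset.sum_boole,
    countCoset M₀ x, countCoset' M₀ y, countInter2 M₀ x y]
  by_cases h : x - y ∈ M₀ <;> simp [h, Finset.card_univ] <;> ring

private lemma nm_facts (hM : M₀.IsMaximal)
    (h3 : Fintype.card R₀ / Nat.card M₀ % 4 = 3) :
    1 ≤ Nat.card M₀ ∧ 3 * Nat.card M₀ ≤ Fintype.card R₀ := by
  obtain ⟨-, -, -, hcard, hq3, hm1⟩ := basic_facts hM h3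
  refine ⟨hm1, ?_⟩
  rw [hcard]
  have h3q : 3 ≤ Nat.card (R₀ ⧸ M₀) := by omega
  have := Nat.mul_le_mul_left (Nat.card M₀) h3q
  omega

private lemma eig_cases (hM : M₀.IsMaximal)
    (h3 : Fintype.card R₀ / Nat.card M₀ % 4 = 3)
    (hA : (adjMat R₀).IsHermitian) (i : R₀) :
    hA.eigenvalues i = (Fintype.card R₀ : ℝ) - Nat.card M₀ ∨ hA.eigenvalues i = 0 ∨
      hA.eigenvalues i = -(Nat.card M₀ : ℝ) := by
  classical
  obtain ⟨hm1, h3m⟩ := nm_facts hM h3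
  set n : ℝ := (Fintype.card R₀ : ℝ) with hn
  set m : ℝ := (Nat.card M₀ : ℝ) with hm
  have hnm : (0 : ℝ) < n - m := by
    rw [hn, hm]
    have : (Nat.card M₀ : ℝ) ≥ 1 := by exact_mod_cast hm1
    have h2 : (3 * Nat.card M₀ : ℝ) ≤ (Fintype.card R₀ : ℝ) := by exact_mod_cast h3m
    push_cast at h2
    linarith
  set lam := hA.eigenvalues i with hlam
  set v : R₀ → ℝ := ⇑(hA.eigenvectorBasis i) with hv
  have hmv : adjMat R₀ *ᵥ v = lam • v := hA.mulVec_eigenvectorBasis i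
  have hv0 : v ≠ 0 := by
    intro h
    exact hA.eigenvectorBasis.orthonormal.ne_zero i (by ext x; exact congrFun h x)
  have key : ∀ x, (lam ^ 2 + m * lam) * v x = (n - m) * ∑ y, v y := by
    intro x
    have e1 : ((adjMat R₀ * adjMat R₀) *ᵥ v) x + m * ((adjMat R₀ *ᵥ v) x)
        = (n - m) * ∑ y, v y := by
      simp only [Matrix.mulVec, dotProduct, Matrix.mul_apply]
      rw [Finset.mul_sum, ← Finset.sum_add_distrib, Finset.mul_sum]
      apply Finset.sum_congr rfl
      intro y _
      rw [mulsum hM h3 x y, adj_apply hM h3 x y]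
      simp only [← hm, ← hn]
      by_cases h : x - y ∈ M₀
      · rw [if_pos h, if_pos h]; ring
      · rw [if_neg h, if_neg h]; ring
    have e2 : ((adjMat R₀ * adjMat R₀) *ᵥ v) x + m * ((adjMat R₀ *ᵥ v) x)
        = (lam ^ 2 + m * lam) * v x := by
      rw [← Matrix.mulVec_mulVec, hmv, Matrix.mulVec_smul, hmv]
      simp only [Pi.smul_apply, smul_eq_mul]
      ring
    rw [← e2, e1]
  by_cases hs : ∑ y, v y = 0
  · obtain ⟨x, hx⟩ := Function.ne_iff.mp hv0
    have hkx := key x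
    rw [hs, mul_zero] at hkx
    have h0 : lam ^ 2 + m * lam = 0 := by
      rcases mul_eq_zero.mp hkx with h | h
      · exact h
      · exact absurd h hx
    have h0' : lam * (lam + m) = 0 := by linear_combination h0
    rcases mul_eq_zero.mp h0' with h | h
    · exact Or.inr (Or.inl h)
    · exact Or.inr (Or.inr (by linarith))
  · left
    have hden : lam ^ 2 + m * lam ≠ 0 := by
      intro h0
      have hk := key 0
      rw [h0, zero_mul] at hk
      rcases mul_eq_zero.mp hk.symm with h | h
      · linarith
      · exact hs h
    set c : ℝ := ((n - m) * ∑ y, v y) / (lam ^ 2 + m * lam) with hc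
    have hvc : ∀ x, v x = c := by
      intro x
      rw [hc, eq_div_iff hden, mul_comm]
      exact key x
    have hsum : ∑ y, v y = n * c := by
      rw [Finset.sum_congr rfl (fun y _ => hvc y), Finset.sum_const, Finset.card_univ]
      simp [hn, mul_comm]
    have hc0 : c ≠ 0 := by
      intro h
      exact hs (by rw [hsum, h, mul_zero])
    have heq := congrFun hmv 0
    have hL : (adjMat R₀ *ᵥ v) 0 = (n - m) * c := by
      simp only [Matrix.mulVec, dotProduct]
      rw [Finset.sum_congr rfl (fun y _ => by rw [hvc y]), ← Finset.sum_mul,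
        rowsum hM h3 0]
    rw [hL] at heq
    have heq' : (n - m) * c = lam * c := by
      rw [heq]; simp only [Pi.smul_apply, smul_eq_mul, hvc 0]
    exact (mul_right_cancel₀ hc0 heq').symm

private lemma neg_m_eigen (hM : M₀.IsMaximal)
    (h3 : Fintype.card R₀ / Nat.card M₀ % 4 = 3)
    (hA : (adjMat R₀).IsHermitian) :
    ∃ i, hA.eigenvalues i = -(Nat.card M₀ : ℝ) := by
  classical
  set v : R₀ → ℝ := fun x =>
    (if x ∈ M₀ then (1 : ℝ) else 0) - (if x - 1 ∈ M₀ then (1 : ℝ) else 0) with hvdef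
  have hone : (1 : R₀) ∉ M₀ := by
    rw [← unit_iff_notmem hM]; exact isUnit_one
  have hnegone : (-1 : R₀) ∉ M₀ := by
    rw [← unit_iff_notmem hM]; exact isUnit_one.neg
  have hv0 : v ≠ 0 := by
    intro h
    have := congrFun h 0
    simp only [hvdef, Pi.zero_apply] at this
    rw [if_pos M₀.zero_mem, if_neg (by simpa using hnegone)] at this
    norm_num at this
  have hmv : adjMat R₀ *ᵥ v = (-(Nat.card M₀ : ℝ)) • v := by
    funext x
    simp only [Matrix.mulVec, dotProduct, hvdef]
    have hterm : ∀ y, adjMat R₀ x y *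
        ((if y ∈ M₀ then (1 : ℝ) else 0) - (if y - 1 ∈ M₀ then (1 : ℝ) else 0))
        = ((if x - y ∈ M₀ then (0:ℝ) else 1) * (if y ∈ M₀ then (1 : ℝ) else 0))
          - ((if x - y ∈ M₀ then (0:ℝ) else 1) * (if y - 1 ∈ M₀ then (1 : ℝ) else 0)) := by
      intro y
      rw [adj_apply hM h3]
      ring
    rw [Finset.sum_congr rfl (fun y _ => hterm y), Finset.sum_sub_distrib]
    have hS1 : ∀ a : R₀, (∑ y, (if x - y ∈ M₀ then (0:ℝ) else 1) * (if y - a ∈ M₀ then (1 : ℝ) else 0))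
        = (Nat.card M₀ : ℝ) - (if x - a ∈ M₀ then (Nat.card M₀ : ℝ) else 0) := by
      intro a
      have : ∀ y, (if x - y ∈ M₀ then (0:ℝ) else 1) * (if y - a ∈ M₀ then (1 : ℝ) else 0)
          = (if y - a ∈ M₀ then (1:ℝ) else 0) - (if x - y ∈ M₀ ∧ y - a ∈ M₀ then (1:ℝ) else 0) := by
        intro y
        by_cases h1 : x - y ∈ M₀ <;> by_cases h2 : y - a ∈ M₀ <;> simp [h1, h2]
      rw [Finset.sum_congr rfl (fun y _ => this y), Finset.sum_sub_distrib,
        Finset.sum_boole, Finset.sum_boole, countCoset' M₀ a, countInter2 M₀ x a]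
      by_cases h : x - a ∈ M₀ <;> simp [h]
    have hS0 : (∑ y, (if x - y ∈ M₀ then (0:ℝ) else 1) * (if y ∈ M₀ then (1 : ℝ) else 0))
        = (Nat.card M₀ : ℝ) - (if x ∈ M₀ then (Nat.card M₀ : ℝ) else 0) := by
      have := hS1 0
      simpa using this
    rw [hS0, hS1 1]
    simp only [Pi.smul_apply, smul_eq_mul, hvdef]
    by_cases h1 : x ∈ M₀ <;> by_cases h2 : x - 1 ∈ M₀ <;> simp [h1, h2] <;> ring
  have hspec : -(Nat.card M₀ : ℝ) ∈ spectrum ℝ (adjMat R₀) := by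
    rw [← Matrix.spectrum_toEuclideanLin]
    apply Module.End.HasEigenvalue.mem_spectrum
    apply Module.End.hasEigenvalue_of_hasEigenvector (x := (WithLp.equiv 2 (R₀ → ℝ)).symm v)
    constructor
    · rw [Module.End.mem_eigenspace_iff]
      show Matrix.toEuclideanLin (adjMat R₀) (WithLp.toLp 2 v) = _
      rw [Matrix.toEuclideanLin_apply_piLp_toLp, hmv]
      rfl
    · intro h
      apply hv0
      have := congrArg (WithLp.equiv 2 (R₀ → ℝ)) h
      simpa using this
  rw [hA.spectrum_real_eq_range_eigenvalues] at hspec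
  obtain ⟨i, hi⟩ := hspec
  exact ⟨i, hi⟩

end Aux

open scoped Classical in
/-- Let `R₀` be a finite local ring with maximal ideal `M₀` of order `m₀` such that
`|R₀|/m₀ ≡ 3 (mod 4)`. Then `𝒢_{R₀}`, which is `(|R₀| − m₀)`-regular, is Ramanujan
(every adjacency eigenvalue `λ` with `|λ| ≠ |R₀| − m₀` satisfies
`|λ| ≤ 2√(|R₀| − m₀ − 1)`) if and only if `|R₀| ≥ (m₀ + 2)²/4`. -/
theorem stmt17 (R₀ : Type*) [CommRing R₀] [IsLocalRing R₀] [Fintype R₀]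
    (M₀ : Ideal R₀) (hM : M₀.IsMaximal)
    (h3 : Fintype.card R₀ / Nat.card M₀ % 4 = 3)
    (hA : (adjMat R₀).IsHermitian) :
    (∀ i, |hA.eigenvalues i| ≠ (Fintype.card R₀ : ℝ) - Nat.card M₀ →
        |hA.eigenvalues i| ≤ 2 * Real.sqrt ((Fintype.card R₀ : ℝ) - Nat.card M₀ - 1)) ↔
      ((Nat.card M₀ : ℝ) + 2) ^ 2 / 4 ≤ (Fintype.card R₀ : ℝ) := by
  obtain ⟨hm1, h3m⟩ := nm_facts hM h3
  set n : ℝ := (Fintype.card R₀ : ℝ) with hn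
  set m : ℝ := (Nat.card M₀ : ℝ) with hm
  have hm1' : (1 : ℝ) ≤ m := by rw [hm]; exact_mod_cast hm1
  have h3m' : 3 * m ≤ n := by rw [hn, hm]; exact_mod_cast h3m
  have ht : (0 : ℝ) ≤ n - m - 1 := by linarith
  constructor
  · intro H
    obtain ⟨i, hi⟩ := neg_m_eigen hM h3 hA
    have habs : |hA.eigenvalues i| = m := by
      rw [hi, abs_neg, abs_of_nonneg (by linarith)]
    have hne : |hA.eigenvalues i| ≠ n - m := by
      rw [habs]; intro h; linarith
    have hle : m ≤ 2 * Real.sqrt (n - m - 1) := habs ▸ H i hne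
    have hs0 : (0 : ℝ) ≤ Real.sqrt (n - m - 1) := Real.sqrt_nonneg _
    have hsq : Real.sqrt (n - m - 1) ^ 2 = n - m - 1 := Real.sq_sqrt ht
    nlinarith [mul_le_mul hle hle (by linarith) (by linarith)]
  · intro hq i hi
    rcases eig_cases hM h3 hA i with h | h | h
    · exact absurd (by rw [h, abs_of_nonneg (by linarith)]) hi
    · rw [h, abs_zero]; positivity
    · rw [h, abs_neg, abs_of_nonneg (by linarith)]
      have h4 : (m / 2) ^ 2 ≤ n - m - 1 := by nlinarith
      have := (Real.le_sqrt (by linarith) ht).mpr h4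
      linarith
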